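/- Let S_* = S_*(a_1,…,a_{2k}) be a staircase with points (n_i, m_i) as usual, and suppose t ∈ (0,2) is such that the minimum μ = min_i [(t/2)n_i + (1 − t/2)m_i] is attained at more than one index. Let i₋ < i₊ be the minimal and maximal minimizing indices. Then the Kim–Livingston secondary invariant Υ⁽²⁾_{S_*,t}(s) = −2·( max_{i₋ ≤ j < i₊} [ (s/2)n_j + (1 − s/2)m_{j+1} ] − μ ). -/

import Mathlib

/-- Kim–Livingston secondary invariant of a staircase at a breaking
point. Staircase data: jumps `a_1,…,a_{2k} > 0` summing to `2g`, generators `x_i` at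
`(n_i, m_i)` and `y_j` at `(n_j, m_{j+1})`.  Suppose `t ∈ (0,2)` is such that
`μ = min_i[(t/2)n_i + (1-t/2)m_i]` is attained at more than one index, with extremal
minimizers `i₋ < i₊`.  Over `ℤ/2`, a 1-chain is a finite set `T` of `y`-indices whose
boundary is `T ∆ (T + 1)`; homologies between `x_{i₋}` and `x_{i₊}` are those `T` with
boundary `{i₋, i₊}`.  Then the secondary invariant
`Υ⁽²⁾ = -2·(min over such homologies of the s-filtration level - μ)` equals
`-2·(max_{i₋ ≤ j < i₊}[(s/2)n_j + (1-s/2)m_{j+1}] - μ)`. -/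
theorem stmt_11 (g k : ℕ) (a : ℕ → ℤ)
    (hpos : ∀ i ∈ Finset.Icc 1 (2*k), 0 < a i)
    (hsum : ∑ i ∈ Finset.Icc 1 (2*k), a i = 2*(g:ℤ))
    (n m : ℕ → ℝ)
    (hn : ∀ i, n i = (g:ℝ) - ∑ j ∈ Finset.Icc 1 i, ((a (2*j) : ℤ) : ℝ))
    (hm : ∀ i, m i = ∑ j ∈ Finset.Icc 1 i, ((a (2*j-1) : ℤ) : ℝ))
    (t s : ℝ) (ht : t ∈ Set.Ioo (0:ℝ) 2)
    (E : ℕ → ℝ) (hE : ∀ i, E i = t/2 * n i + (1 - t/2) * m i)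
    (μ : ℝ) (hμ : μ = (Finset.range (k+1)).inf' ⟨0, by simp⟩ E)
    (im ip : ℕ) (hlt : im < ip) (hip : ip ≤ k)
    (him : E im = μ) (hipμ : E ip = μ)
    (hext : ∀ i ≤ k, E i = μ → im ≤ i ∧ i ≤ ip) :
    -2 * (sInf {r : ℝ | ∃ T : Finset ℕ, T ⊆ Finset.range k ∧
        symmDiff T (T.image (· + 1)) = ({im, ip} : Finset ℕ) ∧
        ∃ hT : T.Nonempty,
          r = T.sup' hT (fun j => s/2 * n j + (1 - s/2) * m (j+1))} - μ) =
      -2 * ((Finset.Ico im ip).sup' (Finset.nonempty_Ico.mpr hlt)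
        (fun j => s/2 * n j + (1 - s/2) * m (j+1)) - μ) := by
  classical
  have hTset : ∀ T : Finset ℕ, symmDiff T (T.image (· + 1)) = ({im, ip} : Finset ℕ) →
      T = Finset.Ico im ip := by
    intro T hT
    have key : ∀ j, (j ∈ T ∧ j ∉ T.image (· + 1) ∨ j ∈ T.image (· + 1) ∧ j ∉ T) ↔
        (j = im ∨ j = ip) := by
      intro j
      rw [← Finset.mem_symmDiff, hT]
      simp
    have h0 : (0:ℕ) ∉ T.image (· + 1) := by simp
    have main : ∀ j, j ∈ T ↔ im ≤ j ∧ j < ip := by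
      intro j
      induction j with
      | zero =>
        have hk := key 0
        by_cases h1 : (0:ℕ) ∈ T <;> simp [h1, h0] at hk ⊢ <;> omega
      | succ j ih =>
        have hk := key (j+1)
        have himg : j + 1 ∈ T.image (· + 1) ↔ j ∈ T := by simp
        rw [himg] at hk
        by_cases h1 : j + 1 ∈ T <;> by_cases h2 : j ∈ T <;>
          simp [h1, h2] at hk ih ⊢ <;> omega
    ext j
    rw [main, Finset.mem_Ico]
  have hIcoSd : symmDiff (Finset.Ico im ip) ((Finset.Ico im ip).image (· + 1)) =
      ({im, ip} : Finset ℕ) := by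
    ext j
    simp only [Finset.mem_symmDiff, Finset.mem_image, Finset.mem_Ico, Finset.mem_insert,
      Finset.mem_singleton]
    constructor
    · rintro (⟨h1, h2⟩ | ⟨⟨x, hx, rfl⟩, h2⟩)
      · push_neg at h2
        by_cases hj : j = im
        · exact Or.inl hj
        · exfalso
          have := h2 (j - 1)
          omega
      · push_neg at h2
        omega
    · rintro (h | h)
      · exact Or.inl ⟨⟨by omega, by omega⟩, by rintro ⟨x, hx, hxe⟩; omega⟩
      · exact Or.inr ⟨⟨j - 1, ⟨by omega, by omega⟩, by omega⟩, by omega⟩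
  have hne : (Finset.Ico im ip).Nonempty := Finset.nonempty_Ico.mpr hlt
  have hset : {r : ℝ | ∃ T : Finset ℕ, T ⊆ Finset.range k ∧
        symmDiff T (T.image (· + 1)) = ({im, ip} : Finset ℕ) ∧
        ∃ hT : T.Nonempty,
          r = T.sup' hT (fun j => s/2 * n j + (1 - s/2) * m (j+1))} =
      {(Finset.Ico im ip).sup' hne (fun j => s/2 * n j + (1 - s/2) * m (j+1))} := by
    ext r
    simp only [Set.mem_setOf_eq, Set.mem_singleton_iff]
    constructor
    · rintro ⟨T, hsub, hsd, hTne, rfl⟩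
      have := hTset T hsd
      subst this
      rfl
    · rintro rfl
      refine ⟨Finset.Ico im ip, ?_, hIcoSd, hne, rfl⟩
      intro x hx
      simp only [Finset.mem_Ico] at hx
      simp only [Finset.mem_range]
      omega
  rw [hset, csInf_singleton]
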